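/- Suppose the coefficients of P(q) = Π_{k=1}^m (1-q^{a_k})/(1-q^{b_k}) are nonnegative integers, where a_k, b_k are positive integers, and let X be the random variable with P[X = k] proportional to the coefficient of q^k in P(q). Then for every d ≥ 2, the d-th cumulant of X is κ_d = (B_d/d)(Σ_{k=1}^m a_k^d - b_k^d), where B_d is the d-th Bernoulli number (with B_1 = 1/2 convention for d=1). -/

import Mathlib

open MeasureTheory ProbabilityTheory Polynomial

open Finset
open scoped ContDiff

namespace CGFStmt13Aux

noncomputable def phi : ℝ → ℝ := dslope Real.exp 0

lemma phi_zero : phi 0 = 1 := by simp [phi, dslope_same, Real.deriv_exp]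

lemma phi_apply {t : ℝ} (ht : t ≠ 0) : phi t = (Real.exp t - 1) / t := by
  simp [phi, dslope_of_ne _ ht, slope, Real.exp_zero]
  ring

lemma mul_phi (t : ℝ) : t * phi t = Real.exp t - 1 := by
  rcases eq_or_ne t 0 with rfl | ht
  · simp [Real.exp_zero, phi_zero]
  · rw [phi_apply ht]; field_simp

lemma analyticOnNhd_phi : AnalyticOnNhd ℝ phi Set.univ := by
  intro t _
  rcases eq_or_ne t 0 with rfl | ht
  · obtain ⟨p, hp⟩ := analyticAt_rexp (x := 0)
    exact ⟨_, hp.has_fpower_series_dslope_fslope⟩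
  · have h1 : AnalyticAt ℝ (fun t : ℝ => (Real.exp t - 1) / t) t :=
      ((analyticAt_rexp).sub analyticAt_const).div analyticAt_id ht
    apply h1.congr
    filter_upwards [isOpen_ne.mem_nhds ht] with s hs
    exact (phi_apply hs).symm

lemma phi_pos (t : ℝ) : 0 < phi t := by
  rcases eq_or_ne t 0 with rfl | ht
  · simp [phi_zero]
  · rw [phi_apply ht]
    rcases lt_or_gt_of_ne ht with h | h
    · apply div_pos_of_neg_of_neg _ h
      simp only [sub_neg]
      exact Real.exp_lt_one_iff.2 h
    · apply div_pos _ h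
      simp only [sub_pos]
      linarith [Real.add_one_le_exp t]


lemma iteratedDeriv_add' {f g : ℝ → ℝ} {n : ℕ} (hf : ContDiff ℝ n f) (hg : ContDiff ℝ n g) (x : ℝ) :
    iteratedDeriv n (fun t => f t + g t) x = iteratedDeriv n f x + iteratedDeriv n g x := by
  simp only [← iteratedDerivWithin_univ]
  exact iteratedDerivWithin_add (Set.mem_univ x) uniqueDiffOn_univ hf.contDiffWithinAt hg.contDiffWithinAt

lemma pascal_shuffle (n : ℕ) (u v : ℕ → ℝ) :
    ∑ k ∈ range (n+1), (n.choose k : ℝ) * u (k+1) * v (n-k)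
      + ∑ k ∈ range (n+1), (n.choose k : ℝ) * u k * v (n-k+1)
    = ∑ k ∈ range (n+2), ((n+1).choose k : ℝ) * u k * v (n+1-k) := by
  rw [sum_range_succ' (fun k => ((n+1).choose k : ℝ) * u k * v (n+1-k)) (n+1)]
  have h1 : ∑ k ∈ range (n+1), ((n+1).choose (k+1) : ℝ) * u (k+1) * v (n+1-(k+1))
      = ∑ k ∈ range (n+1), (n.choose k : ℝ) * u (k+1) * v (n-k)
        + ∑ k ∈ range (n+1), (n.choose (k+1) : ℝ) * u (k+1) * v (n-k) := by
    rw [← sum_add_distrib]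
    refine sum_congr rfl fun k hk => ?_
    rw [Nat.choose_succ_succ, Nat.cast_add]
    have : n + 1 - (k+1) = n - k := by omega
    rw [this]; ring
  rw [h1]
  have h2 : ∑ k ∈ range (n+1), (n.choose k : ℝ) * u k * v (n-k+1)
      = ∑ k ∈ range (n+1), (n.choose (k+1) : ℝ) * u (k+1) * v (n-k)
        + ((n+1).choose 0 : ℝ) * u 0 * v (n+1-0) := by
    rw [sum_range_succ' (fun k => (n.choose k : ℝ) * u k * v (n-k+1)) n]
    rw [sum_range_succ (fun k => (n.choose (k+1) : ℝ) * u (k+1) * v (n-k))]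
    simp only [Nat.choose_succ_self, Nat.cast_zero, zero_mul, add_zero, Nat.choose_zero_right,
      Nat.cast_one, one_mul, Nat.sub_zero]
    refine congrArg₂ (· + ·) (sum_congr rfl fun k hk => ?_) rfl
    rw [mem_range] at hk
    have : n - (k+1) + 1 = n - k := by omega
    rw [this]
  rw [h2]; ring

lemma iteratedDeriv_mul' {f g : ℝ → ℝ} (hf : ContDiff ℝ ∞ f) (hg : ContDiff ℝ ∞ g) (n : ℕ) :
    iteratedDeriv n (fun t => f t * g t)
      = fun x => ∑ k ∈ range (n+1), (n.choose k : ℝ) * iteratedDeriv k f x * iteratedDeriv (n-k) g x := by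
  induction n generalizing f g with
  | zero => simp
  | succ n IH =>
    have hf' : ContDiff ℝ ∞ (deriv f) := (contDiff_infty_iff_deriv.mp hf).2
    have hg' : ContDiff ℝ ∞ (deriv g) := (contDiff_infty_iff_deriv.mp hg).2
    have hd : deriv (fun t => f t * g t) = fun t => deriv f t * g t + f t * deriv g t := by
      funext t
      exact deriv_mul (hf.differentiable (by norm_num) t) (hg.differentiable (by norm_num) t)
    rw [iteratedDeriv_succ', hd]
    funext x
    rw [show (fun t => deriv f t * g t + f t * deriv g t)
        = (fun t => (fun s => deriv f s * g s) t + (fun s => f s * deriv g s) t) from rfl]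
    rw [iteratedDeriv_add' ((hf'.mul hg).of_le (by exact_mod_cast le_top)) ((hf.mul hg').of_le (by exact_mod_cast le_top)) x]
    rw [IH hf' hg, IH hf hg']
    have e1 : ∀ k, iteratedDeriv k (deriv f) = iteratedDeriv (k+1) f := by
      intro k; rw [iteratedDeriv_succ']
    have e2 : ∀ k, iteratedDeriv k (deriv g) = iteratedDeriv (k+1) g := by
      intro k; rw [iteratedDeriv_succ']
    simp only [e1, e2]
    have := pascal_shuffle n (fun k => iteratedDeriv k f x) (fun k => iteratedDeriv k g x)
    rw [← this]



lemma contDiff_phi : ContDiff ℝ ∞ phi := analyticOnNhd_phi.contDiff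

lemma continuous_phi : Continuous phi := contDiff_phi.continuous
attribute [fun_prop] continuous_phi

lemma iteratedDeriv_sub' {f g : ℝ → ℝ} {n : ℕ} (hf : ContDiff ℝ n f) (hg : ContDiff ℝ n g) (x : ℝ) :
    iteratedDeriv n (fun t => f t - g t) x = iteratedDeriv n f x - iteratedDeriv n g x := by
  simp only [← iteratedDerivWithin_univ]
  exact iteratedDerivWithin_sub (Set.mem_univ x) uniqueDiffOn_univ hf.contDiffWithinAt hg.contDiffWithinAt

lemma contDiff_expm1 : ContDiff ℝ ∞ (fun t : ℝ => Real.exp t - 1) :=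
  Real.contDiff_exp.sub contDiff_const

lemma iteratedDeriv_exp (n : ℕ) : iteratedDeriv n Real.exp = Real.exp := by
  rw [iteratedDeriv_eq_iterate, Real.iter_deriv_exp]

lemma iteratedDeriv_expm1 (j : ℕ) :
    iteratedDeriv j (fun t : ℝ => Real.exp t - 1) 0 = if j = 0 then 0 else 1 := by
  rcases j with _ | j
  · simp
  · rw [iteratedDeriv_succ', if_neg (Nat.succ_ne_zero j)]
    have : (deriv fun t : ℝ => Real.exp t - 1) = Real.exp := by
      funext t
      rw [deriv_fun_sub (Real.differentiable_exp t) (differentiableAt_const 1)]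
      simp
    rw [this, iteratedDeriv_exp, Real.exp_zero]

lemma iteratedDeriv_zero_fun (k : ℕ) : iteratedDeriv k (fun _ : ℝ => (0:ℝ)) = fun _ => (0:ℝ) := by
  induction k with
  | zero => simp
  | succ k ih => rw [iteratedDeriv_succ, ih]; funext t; simp

lemma iteratedDeriv_id' (k : ℕ) (x : ℝ) :
    iteratedDeriv k (fun t : ℝ => t) x = if k = 0 then x else if k = 1 then 1 else 0 := by
  rcases k with _ | k
  · simp
  · rw [iteratedDeriv_succ']
    have : (deriv fun t : ℝ => t) = fun _ => (1 : ℝ) := by funext t; simp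
    rw [this]
    rcases k with _ | k
    · simp
    · rw [iteratedDeriv_succ']
      have : (deriv fun _ : ℝ => (1 : ℝ)) = fun _ => (0 : ℝ) := by funext t; simp
      rw [this, iteratedDeriv_zero_fun]
      simp

lemma phi_deriv_zero (n : ℕ) : iteratedDeriv n phi 0 = 1 / (n + 1) := by
  have h1 : iteratedDeriv (n+1) (fun t : ℝ => t * phi t) 0 = 1 := by
    have : (fun t : ℝ => t * phi t) = fun t : ℝ => Real.exp t - 1 := funext mul_phi
    rw [this, iteratedDeriv_expm1]
    simp
  rw [iteratedDeriv_mul' (show ContDiff ℝ ∞ (fun t : ℝ => t) from contDiff_id) contDiff_phi (n+1)] at h1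
  have h2 : ∑ k ∈ range (n+2), ((n+1).choose k : ℝ) * iteratedDeriv k (fun t : ℝ => t) 0
        * iteratedDeriv (n+1-k) phi 0 = (n+1) * iteratedDeriv n phi 0 := by
    rw [Finset.sum_eq_single 1]
    · rw [iteratedDeriv_id']
      norm_num
    · intro k hk hk1
      rw [iteratedDeriv_id']
      rcases k with _ | k
      · simp
      · simp only [Nat.succ_ne_zero, if_false]
        rw [if_neg (by omega)]
        ring
    · intro h
      exact absurd (mem_range.2 (by omega)) h
  simp only [] at h1
  rw [h2] at h1
  have : (n : ℝ) + 1 ≠ 0 := by positivity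
  field_simp at h1 ⊢
  linarith

noncomputable def hfun : ℝ → ℝ := fun t => Real.log (phi t)

lemma contDiff_hfun : ContDiff ℝ ∞ hfun := by
  rw [contDiff_iff_contDiffAt]
  intro x
  exact ContDiffAt.log contDiff_phi.contDiffAt (phi_pos x).ne'

lemma differentiable_phi : Differentiable ℝ phi :=
  contDiff_phi.differentiable (by norm_num)

lemma phi_deriv_eq (t : ℝ) : t * deriv phi t + phi t = Real.exp t := by
  have h1 : HasDerivAt (fun t : ℝ => t * phi t) (1 * phi t + t * deriv phi t) t :=
    (hasDerivAt_id t).mul (differentiable_phi t).hasDerivAt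
  have h2 : HasDerivAt (fun t : ℝ => Real.exp t - 1) (Real.exp t) t := by
    simpa using (Real.hasDerivAt_exp t).sub_const 1
  have he : (fun t : ℝ => t * phi t) = fun t : ℝ => Real.exp t - 1 := funext mul_phi
  rw [he] at h1
  have := h1.unique h2
  linarith [this]

lemma deriv_hfun (t : ℝ) : deriv hfun t = deriv phi t / phi t :=
  (((differentiable_phi t).hasDerivAt).log (phi_pos t).ne').deriv

lemma key_identity (t : ℝ) : deriv hfun t * (Real.exp t - 1) = Real.exp t - phi t := by
  rw [deriv_hfun, ← mul_phi t]
  have hφ : phi t ≠ 0 := (phi_pos t).ne'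
  have := phi_deriv_eq t
  field_simp
  have h2 : Real.exp t - phi t = t * deriv phi t := by linarith
  rw [h2]; ring

lemma kappa_rec (N : ℕ) :
    ∑ k ∈ range N, (N.choose k : ℝ) * iteratedDeriv (k+1) hfun 0 = N / (N+1) := by
  have hd : ContDiff ℝ ∞ (deriv hfun) := (contDiff_infty_iff_deriv.mp contDiff_hfun).2
  have hkey : (fun t => deriv hfun t * (Real.exp t - 1))
      = fun t => Real.exp t - phi t := funext key_identity
  have h1 := congrFun (congrArg (iteratedDeriv N) hkey) 0
  rw [iteratedDeriv_mul' hd contDiff_expm1 N] at h1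
  simp only [] at h1
  have h2 : ∑ k ∈ range (N+1), (N.choose k : ℝ) * iteratedDeriv k (deriv hfun) 0
        * iteratedDeriv (N-k) (fun t : ℝ => Real.exp t - 1) 0
      = ∑ k ∈ range N, (N.choose k : ℝ) * iteratedDeriv (k+1) hfun 0 := by
    rw [Finset.sum_range_succ]
    rw [Nat.sub_self, iteratedDeriv_expm1, if_pos rfl]
    rw [mul_zero, add_zero]
    refine sum_congr rfl fun k hk => ?_
    rw [mem_range] at hk
    rw [iteratedDeriv_expm1, if_neg (by omega), ← iteratedDeriv_succ']
    ring
  rw [h2] at h1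
  have h3 : iteratedDeriv N (fun t => Real.exp t - phi t) 0 = 1 - 1/(N+1) := by
    rw [iteratedDeriv_sub' (Real.contDiff_exp.of_le (by exact_mod_cast le_top))
      (contDiff_phi.of_le (by exact_mod_cast le_top)) 0]
    rw [iteratedDeriv_exp, Real.exp_zero, phi_deriv_zero]
  rw [h3] at h1
  rw [h1]
  have : (N : ℝ) + 1 ≠ 0 := by positivity
  field_simp
  ring

lemma bernoulli'_rec (N : ℕ) :
    ∑ k ∈ range N, (N.choose k : ℝ) * ((bernoulli' (k+1) : ℚ) : ℝ) / (k+1) = N / (N+1) := by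
  have hq : ∑ k ∈ range N, (N.choose k : ℚ) * bernoulli' (k+1) / (k+1) = N / (N+1) := by
    have key := sum_bernoulli' (N+1)
    rw [Finset.sum_range_succ'] at key
    -- key : ∑ k in range N, ((N+1).choose (k+1)) * bernoulli' (k+1) + ((N+1).choose 0) * bernoulli' 0 = N+1
    have h0 : ((N+1).choose 0 : ℚ) * bernoulli' 0 = 1 := by simp
    rw [h0] at key
    have hsum : ∑ k ∈ range N, ((N+1).choose (k+1) : ℚ) * bernoulli' (k+1)
        = (N+1) * ∑ k ∈ range N, (N.choose k : ℚ) * bernoulli' (k+1) / (k+1) := by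
      rw [Finset.mul_sum]
      refine sum_congr rfl fun k hk => ?_
      have hch : (N+1) * N.choose k = (N+1).choose (k+1) * (k+1) := by
        exact_mod_cast Nat.add_one_mul_choose_eq N k
      have hchq : ((N:ℚ)+1) * N.choose k = ((N+1).choose (k+1) : ℚ) * (k+1) := by
        exact_mod_cast hch
      have hk1 : ((k:ℚ)+1) ≠ 0 := by positivity
      field_simp
      linear_combination (-bernoulli' (k+1)) * hchq
    rw [hsum] at key
    have hN1 : ((N:ℚ)+1) ≠ 0 := by positivity
    field_simp at key ⊢
    push_cast at key
    linarith
  have := congrArg (fun q : ℚ => (q : ℝ)) hq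
  push_cast at this
  convert this using 2 <;> norm_num

lemma kappa_eq : ∀ n : ℕ, iteratedDeriv (n+1) hfun 0 = ((bernoulli' (n+1) : ℚ) : ℝ) / (n+1) := by
  intro n
  induction n using Nat.strong_induction_on with
  | _ n IH =>
    have h1 := kappa_rec (n+1)
    have h2 := bernoulli'_rec (n+1)
    rw [Finset.sum_range_succ] at h1 h2
    have heq : ∑ k ∈ range n, ((n+1).choose k : ℝ) * iteratedDeriv (k+1) hfun 0
        = ∑ k ∈ range n, ((n+1).choose k : ℝ) * ((bernoulli' (k+1) : ℚ) : ℝ) / (k+1) := by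
      refine sum_congr rfl fun k hk => ?_
      rw [mem_range] at hk
      rw [IH k hk]
      ring
    rw [heq] at h1
    have hch : ((n+1).choose n : ℝ) = (n+1 : ℝ) := by
      rw [Nat.choose_succ_self_right]
      push_cast; ring
    rw [hch] at h1 h2
    have hpos : (0:ℝ) < (n:ℝ) + 1 := by positivity
    have := h1.trans h2.symm
    -- (n+1) * κ = (n+1) * B/(n+1)... solve
    have h3 : ((n:ℝ)+1) * iteratedDeriv (n+1) hfun 0
        = ((n:ℝ)+1) * (((bernoulli' (n+1) : ℚ) : ℝ) / (n+1)) := by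
      have : ((n:ℝ)+1) * ((bernoulli' (n+1) : ℚ) : ℝ) / ((n:ℝ)+1)
          = ((n:ℝ)+1) * (((bernoulli' (n+1) : ℚ) : ℝ) / (n+1)) := by ring
      push_cast at this ⊢
      linarith [this]
    have := mul_left_cancel₀ hpos.ne' h3
    push_cast
    push_cast at this
    exact this


lemma eval_one_pos (P : Polynomial ℤ) (hP : P ≠ 0) (hco : ∀ k, 0 ≤ P.coeff k) :
    0 < P.eval 1 := by
  rw [Polynomial.eval_eq_sum_range]
  refine Finset.sum_pos' (fun i _ => by simpa using hco i) ⟨P.natDegree, ?_, ?_⟩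
  · exact mem_range.2 (Nat.lt_succ_self _)
  · simpa using lt_of_le_of_ne (hco P.natDegree) (Ne.symm (mt Polynomial.leadingCoeff_eq_zero.1 hP))

lemma evalQ_pos (P : Polynomial ℤ) (hP : P ≠ 0) (hco : ∀ k, 0 ≤ P.coeff k)
    {x : ℝ} (hx : 0 < x) : 0 < (P.map (Int.castRingHom ℝ)).eval x := by
  rw [Polynomial.eval_eq_sum_range' (lt_of_le_of_lt Polynomial.natDegree_map_le
    (Nat.lt_succ_self _))]
  refine Finset.sum_pos' (fun i _ => ?_) ⟨P.natDegree, mem_range.2 (Nat.lt_succ_self _), ?_⟩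
  · simp only [Polynomial.coeff_map, Int.coe_castRingHom]
    have := hco i
    positivity
  · simp only [Polynomial.coeff_map, Int.coe_castRingHom]
    have h1 : (0:ℤ) < P.coeff P.natDegree :=
      lt_of_le_of_ne (hco P.natDegree) (Ne.symm (mt Polynomial.leadingCoeff_eq_zero.1 hP))
    have h2 : (0:ℝ) < (P.coeff P.natDegree : ℝ) := by exact_mod_cast h1
    positivity

lemma measure_decomp (P : Polynomial ℤ) :
    (Measure.sum fun k : ℕ =>
        (ENNReal.ofReal ((P.coeff k : ℝ) / ((P.eval 1 : ℤ) : ℝ))) • Measure.dirac k)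
      = ∑ k ∈ range (P.natDegree + 1),
        (ENNReal.ofReal ((P.coeff k : ℝ) / ((P.eval 1 : ℤ) : ℝ))) • Measure.dirac k := by
  ext s hs
  rw [Measure.sum_apply _ hs]
  rw [Measure.finset_sum_apply]
  refine (tsum_eq_sum ?_)
  intro k hk
  rw [mem_range, not_lt] at hk
  have : P.coeff k = 0 := Polynomial.coeff_eq_zero_of_natDegree_lt (by omega)
  simp [this]

lemma integrable_wdirac (f : ℕ → ℝ) (c : ENNReal) (hc : c ≠ ⊤) (k : ℕ) :
    Integrable f (c • Measure.dirac k) := by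
  refine Integrable.smul_measure ?_ hc
  constructor
  · exact (measurable_from_top : Measurable f).aestronglyMeasurable
  · rw [HasFiniteIntegral, MeasureTheory.lintegral_dirac]
    exact ENNReal.coe_lt_top

lemma mgf_eq (P : Polynomial ℤ) (hP : P ≠ 0) (hco : ∀ k, 0 ≤ P.coeff k) (t : ℝ) :
    mgf (fun k : ℕ => (k : ℝ))
      (Measure.sum fun k : ℕ =>
        (ENNReal.ofReal ((P.coeff k : ℝ) / ((P.eval 1 : ℤ) : ℝ))) • Measure.dirac k) t
    = (P.map (Int.castRingHom ℝ)).eval (Real.exp t) / ((P.eval 1 : ℤ) : ℝ) := by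
  have hS : (0:ℝ) < ((P.eval 1 : ℤ) : ℝ) := by exact_mod_cast eval_one_pos P hP hco
  rw [mgf, measure_decomp P]
  rw [integral_finset_sum_measure (fun k _ => integrable_wdirac _ _ ENNReal.ofReal_ne_top k)]
  have hterm : ∀ k, ∫ x : ℕ, Real.exp (t * x)
        ∂((ENNReal.ofReal ((P.coeff k : ℝ) / ((P.eval 1 : ℤ) : ℝ))) • Measure.dirac k)
      = (P.coeff k : ℝ) / ((P.eval 1 : ℤ) : ℝ) * Real.exp (t * k) := by
    intro k
    rw [integral_smul_measure, integral_dirac]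
    rw [ENNReal.toReal_ofReal (div_nonneg (by exact_mod_cast hco k) hS.le)]
    rfl
  simp only [hterm]
  rw [Polynomial.eval_eq_sum_range' (lt_of_le_of_lt Polynomial.natDegree_map_le
    (Nat.lt_succ_self _)), Finset.sum_div]
  refine Finset.sum_congr rfl fun k _ => ?_
  rw [Polynomial.coeff_map, Int.coe_castRingHom]
  rw [mul_comm t (k:ℝ), Real.exp_nat_mul]
  ring

lemma one_sub_exp (n : ℕ) (t : ℝ) :
    1 - Real.exp (n * t) = (-t) * ((n : ℝ) * phi (n * t)) := by
  have := mul_phi ((n:ℝ) * t)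
  linarith [this]

lemma prod_identity (m : ℕ) (a b : Fin m → ℕ) (P : Polynomial ℤ)
    (hprod : P * (∏ k, (1 - (Polynomial.X : Polynomial ℤ) ^ b k)) =
      ∏ k, (1 - (Polynomial.X : Polynomial ℤ) ^ a k)) (t : ℝ) :
    (P.map (Int.castRingHom ℝ)).eval (Real.exp t) * (∏ k, ((b k : ℝ) * phi ((b k) * t)))
      = ∏ k, ((a k : ℝ) * phi ((a k) * t)) := by
  set Q := P.map (Int.castRingHom ℝ) with hQ
  -- step 1 : identity with 1 - exp terms
  have step1 : ∀ s : ℝ, Q.eval (Real.exp s) * (∏ k, (1 - Real.exp ((b k) * s)))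
      = ∏ k, (1 - Real.exp ((a k) * s)) := by
    intro s
    have h1 := congrArg (fun p : Polynomial ℤ => (p.map (Int.castRingHom ℝ)).eval (Real.exp s))
      hprod
    simp only [Polynomial.map_mul, Polynomial.map_prod, Polynomial.map_sub, Polynomial.map_pow,
      Polynomial.map_one, Polynomial.map_X, Polynomial.eval_mul, Polynomial.eval_prod,
      Polynomial.eval_sub, Polynomial.eval_one, Polynomial.eval_pow, Polynomial.eval_X] at h1
    simpa only [← Real.exp_nat_mul] using h1
  -- step 2 : equality away from 0
  have step2 : ∀ s : ℝ, s ≠ 0 →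
      Q.eval (Real.exp s) * (∏ k, ((b k : ℝ) * phi ((b k) * s)))
        = ∏ k, ((a k : ℝ) * phi ((a k) * s)) := by
    intro s hs
    have h1 := step1 s
    simp only [one_sub_exp, Finset.prod_mul_distrib, Finset.prod_const, Finset.card_univ,
      Fintype.card_fin] at h1
    have hne : (-s) ^ m ≠ 0 := pow_ne_zero _ (neg_ne_zero.2 hs)
    have h2 : (-s)^m * (Q.eval (Real.exp s) * ∏ k, ((b k : ℝ) * phi ((b k) * s)))
        = (-s)^m * ∏ k, ((a k : ℝ) * phi ((a k) * s)) := by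
      rw [Finset.prod_mul_distrib, Finset.prod_mul_distrib]
      linear_combination h1
    exact mul_left_cancel₀ hne h2
  -- step 3 : continuity
  have hc1 : Continuous fun s : ℝ => Q.eval (Real.exp s) * ∏ k, ((b k : ℝ) * phi ((b k) * s)) := by
    fun_prop
  have hc2 : Continuous fun s : ℝ => ∏ k, ((a k : ℝ) * phi ((a k) * s)) := by fun_prop
  have := Continuous.ext_on (dense_compl_singleton (0:ℝ)) hc1 hc2 ?_
  · exact congrFun this t
  · intro s hs
    exact step2 s hs

lemma iteratedDeriv_finsum {ι : Type*} (s : Finset ι) (f : ι → ℝ → ℝ) {n : ℕ}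
    (hf : ∀ i, ContDiff ℝ n (f i)) (x : ℝ) :
    iteratedDeriv n (fun t => ∑ i ∈ s, f i t) x = ∑ i ∈ s, iteratedDeriv n (f i) x := by
  classical
  induction s using Finset.induction with
  | empty => simp [iteratedDeriv_zero_fun]
  | insert _ _ hnotmem ih =>
    rename_i j s'
    rw [Finset.sum_insert hnotmem]
    have : (fun t => ∑ i ∈ insert j s', f i t) = fun t => f j t + ∑ i ∈ s', f i t := by
      funext t; rw [Finset.sum_insert hnotmem]
    rw [this, iteratedDeriv_add' (hf j) (ContDiff.sum fun i _ => hf i) x, ih]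

lemma iteratedDeriv_add_const {F : ℝ → ℝ} {n : ℕ} (hn : 1 ≤ n) (C : ℝ) :
    iteratedDeriv n (fun t => F t + C) = iteratedDeriv n F := by
  obtain ⟨e, rfl⟩ := Nat.exists_eq_add_of_le hn
  rw [add_comm 1 e]
  rw [iteratedDeriv_succ', iteratedDeriv_succ']
  rw [deriv_add_const' C]


lemma comp_smooth (c : ℝ) (n : ℕ) : ContDiff ℝ n (fun t : ℝ => hfun (c * t)) :=
  (contDiff_hfun.of_le (by exact_mod_cast le_top)).comp (contDiff_const.mul contDiff_id)

end CGFStmt13Aux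


open CGFStmt13Aux in
/-- Cumulants of cyclotomic generating functions (Hwang–Zacharovas / Chen–Wang–Wang): if
`P(q) = Π_k (1-q^{a_k})/(1-q^{b_k})` is a polynomial with non-negative integer coefficients and
`X` is the random variable with `P[X = k]` proportional to the coefficient of `q^k`, then for
`d ≥ 2` the d-th cumulant of `X` is `(B_d/d)(Σ_k a_k^d - b_k^d)`. -/
theorem stmt13 (m : ℕ) (a b : Fin m → ℕ) (ha : ∀ k, 0 < a k) (hb : ∀ k, 0 < b k)
    (P : Polynomial ℤ) (hP : P ≠ 0) (hco : ∀ k, 0 ≤ P.coeff k)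
    (hprod : P * (∏ k, (1 - (Polynomial.X : Polynomial ℤ) ^ b k)) =
      ∏ k, (1 - (Polynomial.X : Polynomial ℤ) ^ a k)) :
    ∀ d : ℕ, 2 ≤ d →
      iteratedDeriv d
        (cgf (fun k : ℕ => (k : ℝ))
          (Measure.sum fun k : ℕ =>
            (ENNReal.ofReal ((P.coeff k : ℝ) / ((P.eval 1 : ℤ) : ℝ))) • Measure.dirac k)) 0 =
        ((bernoulli d : ℚ) : ℝ) / d * ((∑ k, (a k : ℝ) ^ d) - ∑ k, (b k : ℝ) ^ d) := by
  intro d hd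
  have hS : (0:ℝ) < ((P.eval 1 : ℤ) : ℝ) := by exact_mod_cast eval_one_pos P hP hco
  have hApos : ∀ t : ℝ, ∀ k : Fin m, 0 < (a k : ℝ) * phi ((a k) * t) := fun t k =>
    mul_pos (by exact_mod_cast ha k) (phi_pos _)
  have hBpos : ∀ t : ℝ, ∀ k : Fin m, 0 < (b k : ℝ) * phi ((b k) * t) := fun t k =>
    mul_pos (by exact_mod_cast hb k) (phi_pos _)
  have hcgf : cgf (fun k : ℕ => (k : ℝ))
      (Measure.sum fun k : ℕ =>
        (ENNReal.ofReal ((P.coeff k : ℝ) / ((P.eval 1 : ℤ) : ℝ))) • Measure.dirac k)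
      = fun t => ((∑ k : Fin m, hfun ((a k : ℝ) * t)) - ∑ k : Fin m, hfun ((b k : ℝ) * t))
          + ((∑ k : Fin m, Real.log (a k)) - (∑ k : Fin m, Real.log (b k))
            - Real.log ((P.eval 1 : ℤ) : ℝ)) := by
    funext t
    rw [cgf, mgf_eq P hP hco t]
    have hQpos : 0 < (P.map (Int.castRingHom ℝ)).eval (Real.exp t) :=
      evalQ_pos P hP hco (Real.exp_pos t)
    have hA : 0 < ∏ k : Fin m, ((a k : ℝ) * phi ((a k) * t)) :=
      Finset.prod_pos fun k _ => hApos t k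
    have hB : 0 < ∏ k : Fin m, ((b k : ℝ) * phi ((b k) * t)) :=
      Finset.prod_pos fun k _ => hBpos t k
    have hqa : (P.map (Int.castRingHom ℝ)).eval (Real.exp t)
        = (∏ k : Fin m, ((a k : ℝ) * phi ((a k) * t)))
          / (∏ k : Fin m, ((b k : ℝ) * phi ((b k) * t))) := by
      rw [eq_div_iff hB.ne']
      exact prod_identity m a b P hprod t
    rw [Real.log_div hQpos.ne' hS.ne', hqa, Real.log_div hA.ne' hB.ne']
    rw [Real.log_prod (fun k _ => (hApos t k).ne'),
      Real.log_prod (fun k _ => (hBpos t k).ne')]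
    have hla : ∀ k : Fin m, Real.log ((a k : ℝ) * phi ((a k) * t))
        = Real.log (a k) + hfun ((a k : ℝ) * t) := fun k =>
      Real.log_mul (by exact_mod_cast (ha k).ne') (phi_pos _).ne'
    have hlb : ∀ k : Fin m, Real.log ((b k : ℝ) * phi ((b k) * t))
        = Real.log (b k) + hfun ((b k : ℝ) * t) := fun k =>
      Real.log_mul (by exact_mod_cast (hb k).ne') (phi_pos _).ne'
    simp only [hla, hlb, Finset.sum_add_distrib]
    ring
  rw [hcgf, iteratedDeriv_add_const (by omega)]
  have hsa : ContDiff ℝ d (fun t : ℝ => ∑ k : Fin m, hfun ((a k : ℝ) * t)) :=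
    ContDiff.sum fun k _ => comp_smooth _ d
  have hsb : ContDiff ℝ d (fun t : ℝ => ∑ k : Fin m, hfun ((b k : ℝ) * t)) :=
    ContDiff.sum fun k _ => comp_smooth _ d
  rw [iteratedDeriv_sub' hsa hsb 0]
  rw [iteratedDeriv_finsum _ _ (fun k => comp_smooth _ d) 0,
    iteratedDeriv_finsum _ _ (fun k => comp_smooth _ d) 0]
  have hterm : ∀ c : ℝ, iteratedDeriv d (fun t : ℝ => hfun (c * t)) 0
      = c ^ d * iteratedDeriv d hfun 0 := by
    intro c
    have := congrFun (iteratedDeriv_comp_const_mul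
      (contDiff_hfun.of_le (by exact_mod_cast le_top) : ContDiff ℝ d hfun) c) 0
    simpa using this
  simp only [hterm]
  obtain ⟨e, rfl⟩ : ∃ e, d = e + 1 := ⟨d - 1, by omega⟩
  rw [kappa_eq e]
  have hber : ((bernoulli' (e+1) : ℚ) : ℝ) = ((bernoulli (e+1) : ℚ) : ℝ) := by
    rw [bernoulli_eq_bernoulli'_of_ne_one (by omega)]
  rw [hber]
  rw [← Finset.sum_mul, ← Finset.sum_mul]
  push_cast
  ring
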